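/- Let a > 0, c > 0, τ ≥ 0, and let f(ρ) = (1/2)·√(a/π)·ρ^(-3/2)·exp(-a/(4ρ)). Set a† = τ/c + a/4. Then for any 0 < P_low ≤ P_up, ∫_{P_low}^{P_up} exp(-τ/(cρ)) f(ρ) dρ = √(a/(π a†)) · ∫_{√(a†/P_up)}^{√(a†/P_low)} exp(-t²) dt. -/

import Mathlib

open MeasureTheory Real intervalIntegral Set

lemma rpow_neg_three_halves {x : ℝ} (hx : 0 < x) :
    x ^ (-(3 : ℝ) / 2) = 1 / (x * Real.sqrt x) := by
  have h1 : x ^ ((3 : ℝ) / 2) = x * Real.sqrt x := by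
    rw [show ((3 : ℝ) / 2) = 1 + 1 / 2 by norm_num, Real.rpow_add hx, Real.rpow_one,
      Real.sqrt_eq_rpow, one_div]
  rw [show (-(3 : ℝ) / 2) = -((3 : ℝ) / 2) by ring, Real.rpow_neg hx.le, h1, one_div]

/-- Coverage probability in closed form (path-loss exponent 4): for `a, c > 0`, `τ ≥ 0`,
`a† = τ/c + a/4`, and `0 < P_low ≤ P_up`,
`∫_{P_low}^{P_up} exp (-τ/(cρ)) f(ρ) dρ
  = √(a/(π a†)) · ∫_{√(a†/P_up)}^{√(a†/P_low)} exp (-t²) dt`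
where `f(ρ) = (1/2)·√(a/π)·ρ^(-3/2)·exp (-a/(4ρ))`. -/
theorem stmt_3 (a c τ : ℝ) (ha : 0 < a) (hc : 0 < c) (hτ : 0 ≤ τ)
    (Plow Pup : ℝ) (hPlow : 0 < Plow) (hle : Plow ≤ Pup) :
    (∫ ρ in Plow..Pup,
        Real.exp (-(τ / (c * ρ))) *
          ((1 / 2) * Real.sqrt (a / Real.pi) * ρ ^ (-(3 : ℝ) / 2) *
            Real.exp (-(a / (4 * ρ))))) =
      Real.sqrt (a / (Real.pi * (τ / c + a / 4))) *
        ∫ t in Real.sqrt ((τ / c + a / 4) / Pup)..Real.sqrt ((τ / c + a / 4) / Plow),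
          Real.exp (-t ^ 2) := by
  have hπ := Real.pi_pos
  set A : ℝ := τ / c + a / 4 with hAdef
  have hA : 0 < A := by positivity
  have hPup : 0 < Pup := hPlow.trans_le hle
  clear_value A
  set α : ℝ := Real.sqrt (A / Pup) with hαdef
  set β : ℝ := Real.sqrt (A / Plow) with hβdef
  have hα : 0 < α := Real.sqrt_pos.mpr (by positivity)
  have hβ : 0 < β := Real.sqrt_pos.mpr (by positivity)
  have hαβ : α ≤ β := Real.sqrt_le_sqrt (by
    apply div_le_div_of_nonneg_left hA.le hPlow hle)
  set g : ℝ → ℝ := fun ρ =>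
    (1 / 2) * Real.sqrt (a / Real.pi) * ρ ^ (-(3 : ℝ) / 2) * Real.exp (-(A / ρ)) with hgdef
  set φ : ℝ → ℝ := fun t => A / t ^ 2 with hφdef
  -- values of φ at endpoints
  have hφα : φ α = Pup := by
    simp only [hφdef, hαdef, Real.sq_sqrt (by positivity : (0:ℝ) ≤ A / Pup)]
    field_simp
  have hφβ : φ β = Plow := by
    simp only [hφdef, hβdef, Real.sq_sqrt (by positivity : (0:ℝ) ≤ A / Plow)]
    field_simp
  -- change of variables
  have key : (∫ t in α..β, (-(2 * A) / t ^ 3) • (g ∘ φ) t) = ∫ ρ in φ α..φ β, g ρ := by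
    apply integral_comp_smul_deriv'
    · intro t ht
      rw [uIcc_of_le hαβ] at ht
      have ht0 : t ≠ 0 := (hα.trans_le ht.1).ne'
      have h2 : HasDerivAt (fun t : ℝ => t ^ 2) (2 * t) t := by
        simpa using hasDerivAt_pow 2 t
      have := (hasDerivAt_const t A).div h2 (pow_ne_zero 2 ht0)
      convert this using 1
      · rfl
      · rfl
      · rfl
      field_simp
      ring
    · apply ContinuousOn.div continuousOn_const (by fun_prop)
      intro t ht
      rw [uIcc_of_le hαβ] at ht
      exact pow_ne_zero 3 (hα.trans_le ht.1).ne'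
    · apply ContinuousOn.mono (s := Ioi (0:ℝ))
      · apply ContinuousOn.mul
        · apply ContinuousOn.mul continuousOn_const
          intro x hx
          exact (Real.continuousAt_rpow_const x _ (Or.inl (ne_of_gt hx))).continuousWithinAt
        · apply Real.continuous_exp.comp_continuousOn
          apply ContinuousOn.neg
          exact ContinuousOn.div continuousOn_const continuousOn_id
            (fun x hx => ne_of_gt hx)
      · rintro _ ⟨t, ht, rfl⟩
        rw [uIcc_of_le hαβ] at ht
        have : 0 < t := hα.trans_le ht.1
        exact div_pos hA (by positivity)
  -- simplify the left side of key pointwise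
  have lhs_eq : (∫ t in α..β, (-(2 * A) / t ^ 3) • (g ∘ φ) t)
      = -(Real.sqrt (a / (Real.pi * A)) * ∫ t in α..β, Real.exp (-t ^ 2)) := by
    rw [show -(Real.sqrt (a / (Real.pi * A)) * ∫ t in α..β, Real.exp (-t ^ 2))
        = ∫ t in α..β, -(Real.sqrt (a / (Real.pi * A)) * Real.exp (-t ^ 2)) by
      rw [← intervalIntegral.integral_const_mul, ← intervalIntegral.integral_neg]]
    apply intervalIntegral.integral_congr
    intro t ht
    rw [uIcc_of_le hαβ] at ht
    have ht0 : 0 < t := hα.trans_le ht.1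
    have hφt : 0 < φ t := div_pos hA (by positivity)
    simp only [Function.comp, hgdef, hφdef, smul_eq_mul]
    rw [rpow_neg_three_halves hφt]
    have hsq : Real.sqrt (A / t ^ 2) = Real.sqrt A / t := by
      rw [Real.sqrt_div hA.le, Real.sqrt_sq ht0.le]
    have hAA : A / (A / t ^ 2) = t ^ 2 := by field_simp
    rw [hAA, hsq]
    have hS : Real.sqrt (a / (Real.pi * A)) = Real.sqrt (a / Real.pi) / Real.sqrt A := by
      rw [(div_div a Real.pi A).symm, Real.sqrt_div (by positivity)]
    rw [hS]
    have h1 : (0:ℝ) < Real.sqrt A := Real.sqrt_pos.mpr hA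
    simp only [hφdef]
    field_simp [ht0.ne']
  rw [hφα, hφβ, lhs_eq] at key
  have final : (∫ ρ in Plow..Pup, g ρ)
      = Real.sqrt (a / (Real.pi * A)) * ∫ t in α..β, Real.exp (-t ^ 2) := by
    rw [intervalIntegral.integral_symm Pup Plow, ← key]; ring
  refine Eq.trans ?_ final
  apply intervalIntegral.integral_congr
  intro ρ hρ
  rw [uIcc_of_le hle] at hρ
  have hρ0 : 0 < ρ := hPlow.trans_le hρ.1
  simp only [hgdef]
  rw [mul_comm, mul_assoc, ← Real.exp_add]
  congr 2
  rw [hAdef]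
  field_simp
  ring
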